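/- Let f be an n-variable Boolean function and T ⊆ [n] a nonempty subset with #T = t. Then inf_f(T) = 1 if and only if for every α ∈ F_2^{n−t} the restriction f_α (obtained by fixing the variables indexed by the complement of T to the values of α) is a balanced function on t variables. -/

import Mathlib

open Finset

namespace BF

/-- Hamming weight of a vector in `F_2^n`. -/
def wt {n : ℕ} (a : Fin n → ZMod 2) : ℕ := (univ.filter fun i => a i ≠ 0).card

/-- Normalised Walsh transform `W_f(a) = 2^{-n} Σ_x (-1)^{f(x) ⊕ ⟨x,a⟩}`. -/
noncomputable def walsh {n : ℕ} (f : (Fin n → ZMod 2) → ZMod 2) (a : Fin n → ZMod 2) : ℝ :=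
  (1 / 2 ^ n) * ∑ x : Fin n → ZMod 2, (-1 : ℝ) ^ (f x + ∑ i, x i * a i).val

/-- Normalised auto-correlation `C_f(a) = 2^{-n} Σ_x (-1)^{f(x) ⊕ f(x ⊕ a)}`. -/
noncomputable def autocorr {n : ℕ} (f : (Fin n → ZMod 2) → ZMod 2) (a : Fin n → ZMod 2) : ℝ :=
  (1 / 2 ^ n) * ∑ x : Fin n → ZMod 2, (-1 : ℝ) ^ (f x + f (x + a)).val

/-- Influence of the set of variables `T` on `f`:
`inf_f(T) = 1 - 2^{-#T} Σ_{a ≤ χ_T} C_f(a)`. -/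
noncomputable def influence {n : ℕ} (f : (Fin n → ZMod 2) → ZMod 2) (T : Finset (Fin n)) : ℝ :=
  1 - (1 / 2 ^ T.card) *
    ∑ a ∈ univ.filter (fun a : Fin n → ZMod 2 => ∀ i, a i ≠ 0 → i ∈ T), autocorr f a

/-- Total influence `t-inf(f) = (Σ_{#T = t} inf_f(T)) / C(n,t)`. -/
noncomputable def totalInf {n : ℕ} (f : (Fin n → ZMod 2) → ZMod 2) (t : ℕ) : ℝ :=
  (∑ T ∈ univ.filter (fun T : Finset (Fin n) => T.card = t), influence f T) / (n.choose t)

/-- `p̂_f(k) = Σ_{wt(u) = k} (W_f(u))²`. -/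
noncomputable def pHat {n : ℕ} (f : (Fin n → ZMod 2) → ZMod 2) (k : ℕ) : ℝ :=
  ∑ u ∈ univ.filter (fun u : Fin n → ZMod 2 => wt u = k), (walsh f u) ^ 2

/-- Combine an assignment `y` on the coordinates in `T` with an assignment `a` on the
coordinates outside `T` into a full input vector. -/
def combine {n : ℕ} (T : Finset (Fin n)) (y : {i : Fin n // i ∈ T} → ZMod 2)
    (a : {i : Fin n // i ∉ T} → ZMod 2) : Fin n → ZMod 2 :=
  fun i => if h : i ∈ T then y ⟨i, h⟩ else a ⟨i, h⟩

/-- The Walsh transform, at the all-zero point, of the restriction `f_a` of `f` obtained by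
fixing the variables outside `T` to the values of `a`. -/
noncomputable def restWalsh0 {n : ℕ} (f : (Fin n → ZMod 2) → ZMod 2) (T : Finset (Fin n))
    (a : {i : Fin n // i ∉ T} → ZMod 2) : ℝ :=
  (1 / 2 ^ T.card) * ∑ y : {i : Fin n // i ∈ T} → ZMod 2, (-1 : ℝ) ^ (f (combine T y a)).val

lemma neg_one_pow_val_add (u v : ZMod 2) :
    ((-1 : ℝ)) ^ (u + v).val = (-1) ^ u.val * (-1) ^ v.val := by
  rw [ZMod.val_add]
  have hu : u.val < 2 := ZMod.val_lt u
  have hv : v.val < 2 := ZMod.val_lt v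
  interval_cases u.val <;> interval_cases v.val <;> norm_num

/-- Character sum of the restriction of `f` to `T` with outside values `b`. -/
noncomputable def Srest {n : ℕ} (f : (Fin n → ZMod 2) → ZMod 2) (T : Finset (Fin n))
    (b : {i : Fin n // i ∉ T} → ZMod 2) : ℝ :=
  ∑ y : {i : Fin n // i ∈ T} → ZMod 2, (-1 : ℝ) ^ (f (combine T y b)).val

lemma combine_add_combine {n : ℕ} (T : Finset (Fin n))
    (y z : {i : Fin n // i ∈ T} → ZMod 2) (b c : {i : Fin n // i ∉ T} → ZMod 2) :
    combine T y b + combine T z c = combine T (y + z) (b + c) := by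
  funext i
  by_cases h : i ∈ T <;> simp [combine, h]

def splitEquiv {n : ℕ} (T : Finset (Fin n)) :
    (({i : Fin n // i ∈ T} → ZMod 2) × ({i : Fin n // i ∉ T} → ZMod 2)) ≃ (Fin n → ZMod 2) where
  toFun p := combine T p.1 p.2
  invFun x := (fun i => x i.1, fun i => x i.1)
  left_inv p := by
    obtain ⟨y, b⟩ := p
    simp only [Prod.mk.injEq]
    constructor <;> funext i
    · simp [combine, i.2]
    · simp [combine, i.2]
  right_inv x := by
    funext i; by_cases h : i ∈ T <;> simp [combine, h]

lemma key_sum {n : ℕ} (f : (Fin n → ZMod 2) → ZMod 2) (T : Finset (Fin n)) :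
    ∑ a ∈ univ.filter (fun a : Fin n → ZMod 2 => ∀ i, a i ≠ 0 → i ∈ T),
        ∑ x : Fin n → ZMod 2, (-1 : ℝ) ^ (f x + f (x + a)).val
      = ∑ b : {i : Fin n // i ∉ T} → ZMod 2, (Srest f T b) ^ 2 := by
  -- reindex the outer sum by functions on T
  rw [show (univ.filter (fun a : Fin n → ZMod 2 => ∀ i, a i ≠ 0 → i ∈ T))
      = Finset.image (fun z : {i : Fin n // i ∈ T} → ZMod 2 => combine T z 0) univ by
    ext a
    simp only [mem_filter, mem_univ, true_and, Finset.mem_image]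
    constructor
    · intro h
      refine ⟨fun i => a i.1, ?_⟩
      funext i
      by_cases hi : i ∈ T
      · simp [combine, hi]
      · simp only [combine, hi, dif_neg, not_false_iff, Pi.zero_apply]
        by_contra hne
        exact hi (h i (Ne.symm hne))
    · rintro ⟨z, rfl⟩ i hi
      by_contra hni
      simp [combine, hni] at hi]
  rw [Finset.sum_image (by
    intro z₁ _ z₂ _ h
    funext i
    have := congrFun h i.1
    simpa [combine, i.2] using this)]
  -- reindex inner sum over x by pairs (y, b)
  have hx : ∀ z : {i : Fin n // i ∈ T} → ZMod 2,
      ∑ x : Fin n → ZMod 2, (-1 : ℝ) ^ (f x + f (x + combine T z 0)).val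
        = ∑ b : {i : Fin n // i ∉ T} → ZMod 2, ∑ y : {i : Fin n // i ∈ T} → ZMod 2,
            (-1 : ℝ) ^ (f (combine T y b)).val * (-1 : ℝ) ^ (f (combine T (y + z) b)).val := by
    intro z
    rw [← Equiv.sum_comp (splitEquiv T)]
    rw [Fintype.sum_prod_type_right]
    refine Finset.sum_congr rfl fun b _ => Finset.sum_congr rfl fun y _ => ?_
    show (-1 : ℝ) ^ (f (combine T y b) + f (combine T y b + combine T z 0)).val = _
    rw [combine_add_combine, add_zero, neg_one_pow_val_add]
  simp only [hx]
  rw [Finset.sum_comm]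
  refine Finset.sum_congr rfl fun b _ => ?_
  rw [Finset.sum_comm]
  have : ∀ y : {i : Fin n // i ∈ T} → ZMod 2,
      ∑ z : {i : Fin n // i ∈ T} → ZMod 2,
          (-1 : ℝ) ^ (f (combine T y b)).val * (-1 : ℝ) ^ (f (combine T (y + z) b)).val
        = (-1 : ℝ) ^ (f (combine T y b)).val * Srest f T b := by
    intro y
    rw [← Finset.mul_sum]
    congr 1
    exact Fintype.sum_equiv (Equiv.addLeft y) _ _ fun z => rfl
  simp only [this]
  rw [← Finset.sum_mul, Srest, sq]

lemma Srest_eq {n : ℕ} (f : (Fin n → ZMod 2) → ZMod 2) (T : Finset (Fin n))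
    (b : {i : Fin n // i ∉ T} → ZMod 2) :
    Srest f T b = (2 : ℝ) ^ T.card
      - 2 * (univ.filter fun y : {i : Fin n // i ∈ T} → ZMod 2 => f (combine T y b) = 1).card := by
  have hcard : Fintype.card ({i : Fin n // i ∈ T} → ZMod 2) = 2 ^ T.card := by
    simp [Fintype.card_fun, Fintype.card_coe]
  rw [Srest, ← Finset.sum_filter_add_sum_filter_not univ
    (fun y : {i : Fin n // i ∈ T} → ZMod 2 => f (combine T y b) = 1)]
  have h1 : ∀ y ∈ univ.filter (fun y : {i : Fin n // i ∈ T} → ZMod 2 => f (combine T y b) = 1),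
      (-1 : ℝ) ^ (f (combine T y b)).val = -1 := by
    intro y hy
    rw [mem_filter] at hy
    rw [hy.2]
    norm_num [show ((1:ZMod 2)).val = 1 from rfl]
  have h0 : ∀ y ∈ univ.filter (fun y : {i : Fin n // i ∈ T} → ZMod 2 => ¬ f (combine T y b) = 1),
      (-1 : ℝ) ^ (f (combine T y b)).val = 1 := by
    intro y hy
    rw [mem_filter] at hy
    have hall : ∀ a : ZMod 2, a ≠ 1 → a = 0 := by decide
    rw [hall _ hy.2]
    norm_num
  rw [Finset.sum_congr rfl h1, Finset.sum_congr rfl h0, Finset.sum_const, Finset.sum_const,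
    nsmul_eq_mul, nsmul_eq_mul, Finset.filter_not,
    Finset.card_sdiff_of_subset (Finset.filter_subset _ _),
    Nat.cast_sub (Finset.card_filter_le _ _), Finset.card_univ, hcard]
  push_cast
  ring

/-- `inf_f(T) = 1` iff every restriction `f_a` (fixing the variables outside
`T` to the values of `a`) is balanced. -/
theorem influence_eq_one_iff_balanced {n : ℕ} (f : (Fin n → ZMod 2) → ZMod 2)
    (T : Finset (Fin n)) (hT : T.Nonempty) :
    influence f T = 1 ↔
      ∀ a : {i : Fin n // i ∉ T} → ZMod 2,
        2 * (univ.filter fun y : {i : Fin n // i ∈ T} → ZMod 2 =>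
          f (combine T y a) = 1).card = 2 ^ T.card := by
  have hsum : ∑ a ∈ univ.filter (fun a : Fin n → ZMod 2 => ∀ i, a i ≠ 0 → i ∈ T),
      autocorr f a = (1 / 2 ^ n) * ∑ b : {i : Fin n // i ∉ T} → ZMod 2, (Srest f T b) ^ 2 := by
    unfold autocorr
    rw [← Finset.mul_sum, key_sum]
  have hiff : influence f T = 1 ↔
      ∑ b : {i : Fin n // i ∉ T} → ZMod 2, (Srest f T b) ^ 2 = 0 := by
    rw [influence, hsum]
    constructor
    · intro h
      have h' : ((1 / 2 ^ T.card : ℝ) * (1 / 2 ^ n)) *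
          ∑ b : {i : Fin n // i ∉ T} → ZMod 2, (Srest f T b) ^ 2 = 0 := by
        rw [mul_assoc]; linarith
      have hne : ((1 / 2 ^ T.card : ℝ) * (1 / 2 ^ n)) ≠ 0 := by positivity
      exact (mul_eq_zero.mp h').resolve_left hne
    · intro h
      rw [h]
      ring
  rw [hiff, Finset.sum_eq_zero_iff_of_nonneg (fun b _ => sq_nonneg _)]
  constructor
  · intro h a
    have hz : Srest f T a = 0 := by
      have := h a (Finset.mem_univ a)
      exact pow_eq_zero_iff (by norm_num) |>.mp this
    rw [Srest_eq] at hz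
    have : (2 : ℝ) * (univ.filter fun y : {i : Fin n // i ∈ T} → ZMod 2 =>
        f (combine T y a) = 1).card = 2 ^ T.card := by linarith
    exact_mod_cast this
  · intro h b _
    have := h b
    have hz : (2 : ℝ) * (univ.filter fun y : {i : Fin n // i ∈ T} → ZMod 2 =>
        f (combine T y b) = 1).card = 2 ^ T.card := by exact_mod_cast this
    rw [Srest_eq, sub_eq_zero.mpr hz.symm]
    ring

end BF
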